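/- (ℛM is relatively uniformly Cauchy complete.) Let M be a frame, (g_n) a sequence of frame homomorphisms Opens ℝ → M, and f : Opens ℝ → M a frame homomorphism with f((−∞,0)) = ⊥. Suppose (g_n) is relatively uniformly Cauchy with regulator f: for every positive integer k there exists m_k such that for all i, j ≥ m_k and all ε > 0, ⨆_{s ∈ ℝ} [ (g_i((−∞,s)) ⊓ g_j((s+ε,∞))) ⊔ (g_j((−∞,s)) ⊓ g_i((s+ε,∞))) ] ≤ f((kε, ∞)). Then there exists a frame homomorphism g₀ : Opens ℝ → M such that (g_n) converges relatively uniformly to g₀ with regulator f: for every positive integer k there exists m_k such that for all n ≥ m_k and all ε > 0, ⨆_{s ∈ ℝ} [ (g₀((−∞,s)) ⊓ g_n((s+ε,∞))) ⊔ (g_n((−∞,s)) ⊓ g₀((s+ε,∞))) ] ≤ f((kε, ∞)). -/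

import Mathlib

open TopologicalSpace Set

/-- The open interval `(a, ∞)` as an open subset of `ℝ`. -/
def oIoi (a : ℝ) : Opens ℝ := ⟨Set.Ioi a, isOpen_Ioi⟩

/-- The open interval `(-∞, a)` as an open subset of `ℝ`. -/
def oIio (a : ℝ) : Opens ℝ := ⟨Set.Iio a, isOpen_Iio⟩

/-- The open interval `(a, b)` as an open subset of `ℝ`. -/
def oIoo (a b : ℝ) : Opens ℝ := ⟨Set.Ioo a b, isOpen_Ioo⟩

namespace RUCaux


lemma oIoi_mono {a b : ℝ} (h : a ≤ b) : oIoi b ≤ oIoi a := fun x hx => lt_of_le_of_lt h hx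

lemma oIio_mono {a b : ℝ} (h : a ≤ b) : oIio a ≤ oIio b := fun x hx => lt_of_lt_of_le hx h

lemma oIoi_inf_oIio_le {a b c : ℝ} (h : Ioi a ∩ Iio b ⊆ Ioi c) : oIoi a ⊓ oIio b ≤ oIoi c := by
  intro x hx
  exact h hx

lemma oIoi_inf_oIio_bot {a b : ℝ} (h : b ≤ a) : oIoi a ⊓ oIio b = ⊥ := by
  apply le_bot_iff.mp
  intro x hx
  rcases hx with ⟨h1, h2⟩
  exact absurd (lt_trans h2 (lt_of_le_of_lt h h1)) (lt_irrefl x)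

lemma oIoi_sup_oIio_top {a b : ℝ} (h : a < b) : oIoi a ⊔ oIio b = ⊤ := by
  apply top_le_iff.mp
  intro x _
  rcases lt_or_ge a x with h1 | h1
  · exact Or.inl h1
  · exact Or.inr (lt_of_le_of_lt h1 h)

lemma iSup_oIio : (⨆ r : ℝ, oIio r) = ⊤ := by
  apply top_le_iff.mp
  intro x _
  have : x ∈ (↑(⨆ r : ℝ, oIio r) : Set ℝ) := by
    rw [Opens.coe_iSup]
    exact mem_iUnion.mpr ⟨x + 1, by simp [oIio, lt_add_one]⟩
  exact this

lemma iSup_oIoi_add (r : ℝ) : (⨆ p : ℝ, oIoi (p + r)) = ⊤ := by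
  apply top_le_iff.mp
  intro x _
  have : x ∈ (↑(⨆ p : ℝ, oIoi (p + r)) : Set ℝ) := by
    rw [Opens.coe_iSup]
    refine mem_iUnion.mpr ⟨x - r - 1, ?_⟩
    simp only [oIoi, Opens.coe_mk, mem_Ioi]
    linarith
  exact this

lemma oIoi_add_eq (p r : ℝ) : oIoi (p + r) = ⨆ p' : ℝ, ⨆ _ : p < p', oIoi (p' + r) := by
  apply le_antisymm
  · intro x hx
    have hx' : p + r < x := hx
    have : x ∈ (↑(⨆ p' : ℝ, ⨆ _ : p < p', oIoi (p' + r)) : Set ℝ) := by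
      simp only [Opens.coe_iSup]
      refine mem_iUnion.mpr ⟨(p + (x - r)) / 2, mem_iUnion.mpr ⟨by linarith, ?_⟩⟩
      simp only [oIoi, Opens.coe_mk, mem_Ioi]; linarith
    exact this
  · refine iSup_le fun p' => iSup_le fun hp' => oIoi_mono (by linarith)

lemma oIio_sub_eq (q r : ℝ) : oIio (q - r) = ⨆ q' : ℝ, ⨆ _ : q' < q, oIio (q' - r) := by
  apply le_antisymm
  · intro x hx
    have hx' : x < q - r := hx
    have : x ∈ (↑(⨆ q' : ℝ, ⨆ _ : q' < q, oIio (q' - r)) : Set ℝ) := by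
      simp only [Opens.coe_iSup]
      refine mem_iUnion.mpr ⟨((x + r) + q) / 2, mem_iUnion.mpr ⟨by linarith, ?_⟩⟩
      simp only [oIio, Opens.coe_mk, mem_Iio]; linarith
    exact this
  · refine iSup_le fun q' => iSup_le fun hq' => oIio_mono (by linarith)

lemma iSup_nat_oIio {r : ℝ} (hr : 0 < r) : (⨆ k : ℕ, oIio ((k + 1 : ℝ) * r)) = ⊤ := by
  apply top_le_iff.mp
  intro x _
  have : x ∈ (↑(⨆ k : ℕ, oIio ((k + 1 : ℝ) * r)) : Set ℝ) := by
    rw [Opens.coe_iSup]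
    obtain ⟨k, hk⟩ := exists_nat_gt (x / r)
    refine mem_iUnion.mpr ⟨k, ?_⟩
    simp only [oIio, Opens.coe_mk, mem_Iio]
    have : x / r < k + 1 := lt_trans hk (lt_add_one _)
    calc x = (x / r) * r := by field_simp
    _ < (k + 1 : ℝ) * r := by exact mul_lt_mul_of_pos_right this hr
  exact this


section Cut

variable {M : Type*} [Order.Frame M] (U L : ℝ → M)

/-- The candidate frame homomorphism built from a Dedekind cut. -/
def cutFun (V : Opens ℝ) : M :=
  ⨆ p : ℝ, ⨆ q : ℝ, ⨆ _ : Ioo p q ⊆ (V : Set ℝ), U p ⊓ L q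

variable {U L}

lemma le_cutFun {p q : ℝ} {V : Opens ℝ} (h : Ioo p q ⊆ (V : Set ℝ)) :
    U p ⊓ L q ≤ cutFun U L V := by
  refine le_trans ?_ (le_iSup _ p)
  refine le_trans ?_ (le_iSup _ q)
  exact le_iSup (fun _ : Ioo p q ⊆ (V : Set ℝ) => U p ⊓ L q) h

lemma cutFun_mono {V W : Opens ℝ} (h : V ≤ W) : cutFun U L V ≤ cutFun U L W := by
  refine iSup_le fun p => iSup_le fun q => iSup_le fun hpq => le_cutFun (hpq.trans h)

variable (hU : ∀ p, U p = ⨆ p' : ℝ, ⨆ _ : p < p', U p')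
variable (hL : ∀ q, L q = ⨆ q' : ℝ, ⨆ _ : q' < q, L q')
variable (hdisj : ∀ p q, q ≤ p → U p ⊓ L q = ⊥)
variable (htot : ∀ p q, p < q → U p ⊔ L q = ⊤)
variable (hUtop : (⨆ p, U p) = ⊤) (hLtop : (⨆ q, L q) = ⊤)

include hU in
lemma U_anti : Antitone U := by
  intro a b hab
  rcases eq_or_lt_of_le hab with rfl | h
  · exact le_refl _
  · rw [hU a]
    refine le_trans ?_ (le_iSup _ b)
    exact le_iSup (fun _ : a < b => U b) h

include hL in
lemma L_mono : Monotone L := by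
  intro a b hab
  rcases eq_or_lt_of_le hab with rfl | h
  · exact le_refl _
  · rw [hL b]
    refine le_trans ?_ (le_iSup _ a)
    exact le_iSup (fun _ : a < b => L a) h

include htot in
/-- The chain lemma. -/
lemma chain_lemma (c : ℕ → ℝ) (hc : ∀ j, c j < c (j + 1)) (n : ℕ) :
    U (c 0) ⊓ L (c (n + 2)) ≤ ⨆ j ∈ Finset.range (n + 1), U (c j) ⊓ L (c (j + 2)) := by
  induction n with
  | zero =>
    exact le_iSup₂_of_le 0 (Finset.mem_range.mpr (Nat.lt_succ_self 0)) le_rfl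
  | succ n ih =>
    have hsplit : U (c 0) ⊓ L (c (n + 3)) =
        (U (c 0) ⊓ L (c (n + 3)) ⊓ U (c (n + 1))) ⊔ (U (c 0) ⊓ L (c (n + 3)) ⊓ L (c (n + 2))) := by
      rw [← inf_sup_left, htot (c (n + 1)) (c (n + 2)) (hc (n + 1)), inf_top_eq]
    rw [hsplit]
    apply sup_le
    · refine le_iSup₂_of_le (n + 1) (Finset.mem_range.mpr (Nat.lt_succ_self (n + 1))) ?_
      exact le_inf inf_le_right (inf_le_left.trans inf_le_right)
    · have h1 : U (c 0) ⊓ L (c (n + 3)) ⊓ L (c (n + 2)) ≤ U (c 0) ⊓ L (c (n + 2)) :=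
        le_inf (inf_le_left.trans inf_le_left) inf_le_right
      refine (h1.trans ih).trans ?_
      exact biSup_mono fun j hj => Finset.mem_range.mpr (Nat.lt_succ_of_lt (Finset.mem_range.mp hj))

lemma Ioo_subset_Ioi {p q t : ℝ} (h : p < q) (hs : Ioo p q ⊆ Ioi t) : t ≤ p := by
  by_contra hc
  push_neg at hc
  have hpm : p < min q t := lt_min h hc
  have h1 := min_le_left q t
  have h2 := min_le_right q t
  have hx : (p + min q t) / 2 ∈ Ioo p q := ⟨by linarith, by linarith⟩
  have := hs hx
  simp only [mem_Ioi] at this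
  linarith

lemma Ioo_subset_Iio {p q t : ℝ} (h : p < q) (hs : Ioo p q ⊆ Iio t) : q ≤ t := by
  by_contra hc
  push_neg at hc
  have hpm : max p t < q := max_lt h hc
  have h1 := le_max_left p t
  have h2 := le_max_right p t
  have hx : (max p t + q) / 2 ∈ Ioo p q := ⟨by linarith, by linarith⟩
  have := hs hx
  simp only [mem_Iio] at this
  linarith

include hU hdisj hLtop in
lemma cutFun_oIoi (t : ℝ) : cutFun U L (oIoi t) = U t := by
  apply le_antisymm
  · refine iSup_le fun p => iSup_le fun q => iSup_le fun hpq => ?_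
    rcases le_or_gt q p with h | h
    · rw [hdisj p q h]; exact bot_le
    · exact inf_le_left.trans (U_anti hU (Ioo_subset_Ioi h hpq))
  · have h1 : U t = ⨆ q : ℝ, U t ⊓ L q := by rw [← inf_iSup_eq, hLtop, inf_top_eq]
    rw [h1]
    exact iSup_le fun q => le_cutFun fun x hx => hx.1

include hL hdisj hUtop in
lemma cutFun_oIio (t : ℝ) : cutFun U L (oIio t) = L t := by
  apply le_antisymm
  · refine iSup_le fun p => iSup_le fun q => iSup_le fun hpq => ?_
    rcases le_or_gt q p with h | h
    · rw [hdisj p q h]; exact bot_le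
    · exact inf_le_right.trans (L_mono hL (Ioo_subset_Iio h hpq))
  · have h1 : L t = ⨆ p : ℝ, U p ⊓ L t := by rw [← iSup_inf_eq, hUtop, top_inf_eq]
    rw [h1]
    exact iSup_le fun p => le_cutFun fun x hx => hx.2

include hUtop hLtop in
lemma cutFun_top : cutFun U L ⊤ = ⊤ := by
  apply top_le_iff.mp
  have key : (⨆ p : ℝ, ⨆ q : ℝ, U p ⊓ L q) = ⊤ := by
    simp_rw [← inf_iSup_eq]
    rw [hLtop]
    simp_rw [inf_top_eq]
    exact hUtop
  rw [← key]
  exact iSup_le fun p => iSup_le fun q => le_cutFun (by simp)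

include hU hL in
lemma cutFun_inf (V W : Opens ℝ) : cutFun U L (V ⊓ W) = cutFun U L V ⊓ cutFun U L W := by
  apply le_antisymm
  · exact le_inf (cutFun_mono inf_le_left) (cutFun_mono inf_le_right)
  · rw [cutFun, cutFun, iSup_inf_eq]
    refine iSup_le fun p => ?_
    rw [iSup_inf_eq]
    refine iSup_le fun q => ?_
    rw [iSup_inf_eq]
    refine iSup_le fun hpq => ?_
    rw [inf_iSup_eq]
    refine iSup_le fun p' => ?_
    rw [inf_iSup_eq]
    refine iSup_le fun q' => ?_
    rw [inf_iSup_eq]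
    refine iSup_le fun hpq' => ?_
    have hsub : Ioo (max p p') (min q q') ⊆ ((V ⊓ W : Opens ℝ) : Set ℝ) := by
      rw [Opens.coe_inf]
      intro x hx
      exact ⟨hpq ⟨lt_of_le_of_lt (le_max_left p p') hx.1, lt_of_lt_of_le hx.2 (min_le_left q q')⟩,
        hpq' ⟨lt_of_le_of_lt (le_max_right p p') hx.1, lt_of_lt_of_le hx.2 (min_le_right q q')⟩⟩
    refine le_trans ?_ (le_cutFun hsub)
    have hu : U p ⊓ L q ⊓ (U p' ⊓ L q') ≤ U (max p p') ⊓ L (min q q') := by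
      apply le_inf
      · rcases max_cases p p' with ⟨h1, _⟩ | ⟨h1, _⟩
        · rw [h1]; exact inf_le_left.trans inf_le_left
        · rw [h1]; exact inf_le_right.trans inf_le_left
      · rcases min_cases q q' with ⟨h1, _⟩ | ⟨h1, _⟩
        · rw [h1]; exact inf_le_left.trans inf_le_right
        · rw [h1]; exact inf_le_right.trans inf_le_right
    exact hu

include hU hL hdisj htot in
lemma cutFun_sSup (S : Set (Opens ℝ)) :
    cutFun U L (sSup S) = ⨆ V ∈ S, cutFun U L V := by
  apply le_antisymm
  · refine iSup_le fun p => iSup_le fun q => iSup_le fun hpq => ?_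
    rcases le_or_gt q p with h | h
    · rw [hdisj p q h]; exact bot_le
    · -- p < q
      have hUL : U p ⊓ L q = ⨆ p' : ℝ, ⨆ _ : p < p', ⨆ q' : ℝ, ⨆ _ : q' < q, U p' ⊓ L q' := by
        conv_lhs => rw [hU p, hL q]
        rw [iSup_inf_eq]
        refine iSup_congr fun p' => ?_
        rw [iSup_inf_eq]
        refine iSup_congr fun _ => ?_
        rw [inf_iSup_eq]
        refine iSup_congr fun q' => ?_
        rw [inf_iSup_eq]
      rw [hUL]
      refine iSup_le fun p' => iSup_le fun hp' => iSup_le fun q' => iSup_le fun hq' => ?_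
      rcases le_or_gt q' p' with h' | h'
      · rw [hdisj p' q' h']; exact bot_le
      · -- p < p' < q' < q, Icc p' q' compact inside the union
        have hcov : Icc p' q' ⊆ ⋃ V : S, ((V : Opens ℝ) : Set ℝ) := by
          intro x hx
          have hmem : x ∈ ((sSup S : Opens ℝ) : Set ℝ) :=
            hpq ⟨lt_of_lt_of_le hp' hx.1, lt_of_le_of_lt hx.2 hq'⟩
          rw [Opens.coe_sSup] at hmem
          simp only [mem_iUnion] at hmem ⊢
          obtain ⟨V, hV, hxV⟩ := hmem
          exact ⟨⟨V, hV⟩, hxV⟩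
        obtain ⟨δ, hδ, hball⟩ := lebesgue_number_lemma_of_metric isCompact_Icc
          (fun V : S => (V : Opens ℝ).2) hcov
        obtain ⟨n, hn⟩ := exists_nat_gt ((q' - p') / δ)
        set h0 : ℝ := (q' - p') / (n + 2) with hh0
        have hnpos : (0:ℝ) < n + 2 := by positivity
        have hh0pos : 0 < h0 := by
          rw [hh0]; exact div_pos (by linarith) hnpos
        have hh0lt : h0 < δ := by
          rw [hh0, div_lt_iff₀ hnpos]
          rw [div_lt_iff₀ hδ] at hn
          nlinarith
        set c : ℕ → ℝ := fun j => p' + j * h0 with hc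
        have hcj : ∀ j, c j < c (j + 1) := by
          intro j
          simp only [hc]
          push_cast
          nlinarith
        have hc0 : c 0 = p' := by simp [hc]
        have hcn : c (n + 2) = q' := by
          simp only [hc, hh0]
          push_cast
          field_simp
          ring
        have hchain := chain_lemma (L := L) htot c hcj n
        rw [hc0, hcn] at hchain
        refine hchain.trans ?_
        refine iSup_le fun j => iSup_le fun hj => ?_
        have hmid : c (j + 1) ∈ Icc p' q' := by
          simp only [Finset.mem_range] at hj
          constructor
          · simp only [hc]; push_cast; nlinarith
          · rw [← hcn]
            simp only [hc]
            push_cast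
            have : (j:ℝ) + 1 ≤ (n:ℝ) + 2 := by
              have : (j:ℝ) < n + 1 := by exact_mod_cast hj
              linarith
            nlinarith
        obtain ⟨V, hV⟩ := hball _ hmid
        have hIoo : Ioo (c j) (c (j + 2)) ⊆ ((V : Opens ℝ) : Set ℝ) := by
          refine subset_trans ?_ hV
          rw [Real.ball_eq_Ioo]
          have e1 : c j = c (j + 1) - h0 := by simp only [hc]; push_cast; ring
          have e2 : c (j + 2) = c (j + 1) + h0 := by simp only [hc]; push_cast; ring
          rw [e1, e2]
          exact Ioo_subset_Ioo (by linarith) (by linarith)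
        refine le_trans (le_cutFun hIoo) ?_
        exact le_iSup₂_of_le (V : Opens ℝ) V.2 le_rfl
  · exact iSup_le fun V => iSup_le fun hV => cutFun_mono (le_sSup hV)

variable (U L)

/-- The frame homomorphism associated to a cut. -/
def cutHom (hU : ∀ p, U p = ⨆ p' : ℝ, ⨆ _ : p < p', U p')
    (hL : ∀ q, L q = ⨆ q' : ℝ, ⨆ _ : q' < q, L q')
    (hdisj : ∀ p q, q ≤ p → U p ⊓ L q = ⊥)
    (htot : ∀ p q, p < q → U p ⊔ L q = ⊤)
    (hUtop : (⨆ p, U p) = ⊤) (hLtop : (⨆ q, L q) = ⊤) : FrameHom (Opens ℝ) M where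
  toFun := cutFun U L
  map_inf' := cutFun_inf hU hL
  map_top' := cutFun_top hUtop hLtop
  map_sSup' := by
    intro S
    show cutFun U L (sSup S) = sSup (cutFun U L '' S)
    rw [cutFun_sSup hU hL hdisj htot, sSup_image]

end Cut

lemma iSup_oIio_sub (r : ℝ) : (⨆ q : ℝ, oIio (q - r)) = ⊤ := by
  apply top_le_iff.mp
  intro x _
  have : x ∈ (↑(⨆ q : ℝ, oIio (q - r)) : Set ℝ) := by
    rw [Opens.coe_iSup]
    refine mem_iUnion.mpr ⟨x + r + 1, ?_⟩
    simp only [oIio, Opens.coe_mk, mem_Iio]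
    linarith

  exact this

lemma interval_incl (k k' : ℕ) (hk : 0 < k) {r ε : ℝ} (hr : 0 < r) (hε : 0 < ε) :
    oIoi ((↑(min (k' + 1) k) : ℝ) * (r + ε)) ⊓ oIio (((k' : ℝ) + 1) * r) ≤ oIoi ((k : ℝ) * ε) := by
  intro x hx
  obtain ⟨h1, h2⟩ := hx
  simp only [oIoi, oIio, Opens.coe_mk, mem_Ioi, mem_Iio] at h1 h2 ⊢
  rcases le_total (k' + 1) k with h | h
  · rw [min_eq_left h] at h1
    push_cast at h1
    nlinarith
  · rw [min_eq_right h] at h1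
    have hkK : (k : ℝ) ≤ (k' : ℝ) + 1 := by exact_mod_cast h
    have hk0 : (0:ℝ) ≤ k := Nat.cast_nonneg k
    show (k : ℝ) * ε < x
    nlinarith [mul_nonneg hk0 hr.le]

lemma interval_empty (k l : ℕ) {r r' pq : ℝ} (hr : 0 < r) (hr' : 0 < r') (hpq : 0 ≤ pq) :
    oIoi ((↑(min (k + 1) (l + 1)) : ℝ) * (pq + r + r')) ⊓ oIio (((k : ℝ) + 1) * r)
      ⊓ oIio (((l : ℝ) + 1) * r') = ⊥ := by
  apply le_bot_iff.mp
  intro x hx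
  obtain ⟨⟨h1, h2⟩, h3⟩ := hx
  simp only [oIoi, oIio, Opens.coe_mk, mem_Ioi, mem_Iio] at h1 h2 h3
  rcases le_total (k + 1) (l + 1) with h | h
  · rw [min_eq_left h] at h1
    push_cast at h1
    nlinarith [Nat.cast_nonneg (α := ℝ) k]
  · rw [min_eq_right h] at h1
    push_cast at h1
    nlinarith [Nat.cast_nonneg (α := ℝ) l]

end RUCaux

open RUCaux

/-- Theorem 12: `ℛM` is relatively uniformly Cauchy complete.  If a sequence of frame
homomorphisms `Opens ℝ → M` is relatively uniformly Cauchy with nonnegative regulator `f`,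
then it converges relatively uniformly, with regulator `f`, to some frame homomorphism
`g₀ : Opens ℝ → M`. -/
theorem ruCauchy_complete {M : Type*} [Order.Frame M]
    (g : ℕ → FrameHom (Opens ℝ) M) (f : FrameHom (Opens ℝ) M) (hf : f (oIio 0) = ⊥)
    (hC : ∀ k : ℕ, 0 < k → ∃ m : ℕ, ∀ i, m ≤ i → ∀ j, m ≤ j → ∀ ε : ℝ, 0 < ε →
      (⨆ s : ℝ, (g i (oIio s) ⊓ g j (oIoi (s + ε))) ⊔ (g j (oIio s) ⊓ g i (oIoi (s + ε)))) ≤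
        f (oIoi ((k : ℝ) * ε))) :
    ∃ g₀ : FrameHom (Opens ℝ) M, ∀ k : ℕ, 0 < k → ∃ m : ℕ, ∀ n, m ≤ n → ∀ ε : ℝ, 0 < ε →
      (⨆ s : ℝ, (g₀ (oIio s) ⊓ g n (oIoi (s + ε))) ⊔ (g n (oIio s) ⊓ g₀ (oIoi (s + ε)))) ≤
        f (oIoi ((k : ℝ) * ε)) := by
  classical
  -- extract a modulus function
  obtain ⟨m, hm⟩ : ∃ m : ℕ → ℕ, ∀ k, 0 < k → ∀ i, m k ≤ i → ∀ j, m k ≤ j → ∀ ε : ℝ, 0 < ε →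
      (⨆ s : ℝ, (g i (oIio s) ⊓ g j (oIoi (s + ε))) ⊔ (g j (oIio s) ⊓ g i (oIoi (s + ε)))) ≤
        f (oIoi ((k : ℝ) * ε)) := by
    choose m' hm' using hC
    refine ⟨fun k => if h : 0 < k then m' k h else 0, fun k hk => ?_⟩
    simp only [dif_pos hk]
    exact hm' k hk
  have key : ∀ c : ℕ, 0 < c → ∀ i j, m c ≤ i → m c ≤ j → ∀ ε : ℝ, 0 < ε → ∀ s : ℝ,
      g i (oIio s) ⊓ g j (oIoi (s + ε)) ≤ f (oIoi ((c : ℝ) * ε)) := by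
    intro c hc i j hi hj ε hε s
    refine le_trans ?_ (hm c hc i hi j hj ε hε)
    exact le_trans le_sup_left (le_iSup (fun s : ℝ =>
      (g i (oIio s) ⊓ g j (oIoi (s + ε))) ⊔ (g j (oIio s) ⊓ g i (oIoi (s + ε)))) s)
  -- monotone enveloping modulus
  set N : ℕ → ℕ := fun k => (Finset.range (k + 1)).sup m with hN
  have hNm : ∀ c k : ℕ, c ≤ k → m c ≤ N k := fun c k h =>
    Finset.le_sup (Finset.mem_range.mpr (Nat.lt_succ_of_le h))
  -- monotonicity helpers
  have hgm : ∀ n : ℕ, ∀ {a b : Opens ℝ}, a ≤ b → g n a ≤ g n b :=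
    fun n {a b} h => OrderHomClass.mono (g n) h
  have hfm : ∀ {a b : Opens ℝ}, a ≤ b → f a ≤ f b := fun {a b} h => OrderHomClass.mono f h
  have hfneg : ∀ t : ℝ, t ≤ 0 → f (oIio t) = ⊥ := fun t ht =>
    le_bot_iff.mp (hf ▸ hfm (oIio_mono ht))
  -- the cut defining the limit
  set U0 : ℝ → M := fun p =>
    ⨆ k : ℕ, ⨆ r : ℝ, g (N (k + 1)) (oIoi (p + r)) ⊓ f (oIio (((k : ℝ) + 1) * r)) with hU0def
  set L0 : ℝ → M := fun q =>
    ⨆ k : ℕ, ⨆ r : ℝ, g (N (k + 1)) (oIio (q - r)) ⊓ f (oIio (((k : ℝ) + 1) * r)) with hL0def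
  have le_U0 : ∀ (p : ℝ) (k : ℕ) (r : ℝ),
      g (N (k + 1)) (oIoi (p + r)) ⊓ f (oIio (((k : ℝ) + 1) * r)) ≤ U0 p := by
    intro p k r
    exact le_iSup_of_le k (le_iSup_of_le r le_rfl)
  have le_L0 : ∀ (q : ℝ) (k : ℕ) (r : ℝ),
      g (N (k + 1)) (oIio (q - r)) ⊓ f (oIio (((k : ℝ) + 1) * r)) ≤ L0 q := by
    intro q k r
    exact le_iSup_of_le k (le_iSup_of_le r le_rfl)
  have hU0anti : Antitone U0 := by
    intro a b hab
    refine iSup_le fun k => iSup_le fun r => ?_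
    exact le_trans (inf_le_inf_right _ (hgm _ (oIoi_mono (by linarith)))) (le_U0 a k r)
  have hL0mono : Monotone L0 := by
    intro a b hab
    refine iSup_le fun k => iSup_le fun r => ?_
    exact le_trans (inf_le_inf_right _ (hgm _ (oIio_mono (by linarith)))) (le_L0 b k r)
  have hU0 : ∀ p, U0 p = ⨆ p' : ℝ, ⨆ _ : p < p', U0 p' := by
    intro p
    apply le_antisymm
    · refine iSup_le fun k => iSup_le fun r => ?_
      rw [oIoi_add_eq p r, map_iSup]
      simp_rw [map_iSup]
      rw [iSup_inf_eq]
      refine iSup_le fun p' => ?_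
      rw [iSup_inf_eq]
      refine iSup_le fun hp' => ?_
      exact le_iSup₂_of_le p' hp' (le_U0 p' k r)
    · exact iSup_le fun p' => iSup_le fun hp' => hU0anti hp'.le
  have hL0 : ∀ q, L0 q = ⨆ q' : ℝ, ⨆ _ : q' < q, L0 q' := by
    intro q
    apply le_antisymm
    · refine iSup_le fun k => iSup_le fun r => ?_
      rw [oIio_sub_eq q r, map_iSup]
      simp_rw [map_iSup]
      rw [iSup_inf_eq]
      refine iSup_le fun q' => ?_
      rw [iSup_inf_eq]
      refine iSup_le fun hq' => ?_
      exact le_iSup₂_of_le q' hq' (le_L0 q' k r)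
    · exact iSup_le fun q' => iSup_le fun hq' => hL0mono hq'.le
  have hdisj : ∀ p q, q ≤ p → U0 p ⊓ L0 q = ⊥ := by
    intro p q hqp
    apply le_bot_iff.mp
    simp only [hU0def, hL0def]
    rw [iSup_inf_eq]
    refine iSup_le fun k => ?_
    rw [iSup_inf_eq]
    refine iSup_le fun r => ?_
    rw [inf_iSup_eq]
    refine iSup_le fun l => ?_
    rw [inf_iSup_eq]
    refine iSup_le fun r' => ?_
    rcases le_or_gt r 0 with hr | hr
    · have hb : f (oIio (((k : ℝ) + 1) * r)) = ⊥ :=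
        hfneg _ (mul_nonpos_of_nonneg_of_nonpos (by positivity) hr)
      rw [hb, inf_bot_eq, bot_inf_eq]
    rcases le_or_gt r' 0 with hr' | hr'
    · have hb : f (oIio (((l : ℝ) + 1) * r')) = ⊥ :=
        hfneg _ (mul_nonpos_of_nonneg_of_nonpos (by positivity) hr')
      simp [hb]
    · set c : ℕ := min (k + 1) (l + 1) with hcdef
      have hc : 0 < c := lt_min (Nat.succ_pos k) (Nat.succ_pos l)
      have hεpos : 0 < p - q + r + r' := by linarith
      have ha := key c hc (N (l + 1)) (N (k + 1)) (hNm c (l + 1) (min_le_right _ _))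
        (hNm c (k + 1) (min_le_left _ _)) (p - q + r + r') hεpos (q - r')
      have e : q - r' + (p - q + r + r') = p + r := by ring
      rw [e] at ha
      calc g (N (k + 1)) (oIoi (p + r)) ⊓ f (oIio (((k : ℝ) + 1) * r)) ⊓
            (g (N (l + 1)) (oIio (q - r')) ⊓ f (oIio (((l : ℝ) + 1) * r')))
          ≤ (g (N (l + 1)) (oIio (q - r')) ⊓ g (N (k + 1)) (oIoi (p + r))) ⊓
            (f (oIio (((k : ℝ) + 1) * r)) ⊓ f (oIio (((l : ℝ) + 1) * r'))) := by
            refine le_inf (le_inf (inf_le_right.trans inf_le_left)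
              (inf_le_left.trans inf_le_left)) (le_inf (inf_le_left.trans inf_le_right)
              (inf_le_right.trans inf_le_right))
        _ ≤ f (oIoi ((c : ℝ) * (p - q + r + r'))) ⊓
            (f (oIio (((k : ℝ) + 1) * r)) ⊓ f (oIio (((l : ℝ) + 1) * r'))) :=
            inf_le_inf_right _ ha
        _ = f (oIoi ((c : ℝ) * (p - q + r + r')) ⊓ oIio (((k : ℝ) + 1) * r)
            ⊓ oIio (((l : ℝ) + 1) * r')) := by rw [map_inf, map_inf, inf_assoc]
        _ = ⊥ := by
            rw [hcdef]
            rw [interval_empty k l hr hr' (by linarith : (0:ℝ) ≤ p - q), map_bot]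
  have htot : ∀ p q, p < q → U0 p ⊔ L0 q = ⊤ := by
    intro p q hpq
    apply top_le_iff.mp
    have hr : 0 < (q - p) / 4 := by linarith
    have hlt : p + (q - p) / 4 < q - (q - p) / 4 := by linarith
    calc (⊤ : M) = f ⊤ := (map_top f).symm
      _ = f (⨆ k : ℕ, oIio (((k : ℝ) + 1) * ((q - p) / 4))) := by rw [iSup_nat_oIio hr]
      _ = ⨆ k : ℕ, f (oIio (((k : ℝ) + 1) * ((q - p) / 4))) := map_iSup f _
      _ ≤ U0 p ⊔ L0 q := by
          refine iSup_le fun k => ?_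
          have htop : g (N (k + 1)) (oIoi (p + (q - p) / 4)) ⊔
              g (N (k + 1)) (oIio (q - (q - p) / 4)) = ⊤ := by
            rw [← map_sup, oIoi_sup_oIio_top hlt, map_top]
          calc f (oIio (((k : ℝ) + 1) * ((q - p) / 4)))
              = (g (N (k + 1)) (oIoi (p + (q - p) / 4)) ⊔
                g (N (k + 1)) (oIio (q - (q - p) / 4))) ⊓
                f (oIio (((k : ℝ) + 1) * ((q - p) / 4))) := by rw [htop, top_inf_eq]
            _ = (g (N (k + 1)) (oIoi (p + (q - p) / 4)) ⊓
                  f (oIio (((k : ℝ) + 1) * ((q - p) / 4)))) ⊔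
                (g (N (k + 1)) (oIio (q - (q - p) / 4)) ⊓
                  f (oIio (((k : ℝ) + 1) * ((q - p) / 4)))) := inf_sup_right _ _ _
            _ ≤ U0 p ⊔ L0 q := sup_le_sup (le_U0 p k _) (le_L0 q k _)
  have hU0top : (⨆ p, U0 p) = ⊤ := by
    apply top_le_iff.mp
    calc (⊤ : M) = f ⊤ := (map_top f).symm
      _ = f (⨆ r : ℝ, oIio r) := by rw [iSup_oIio]
      _ = ⨆ r : ℝ, f (oIio r) := map_iSup f _
      _ ≤ ⨆ p, U0 p := by
          refine iSup_le fun r => ?_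
          have h1 : (⨆ p : ℝ, g (N 1) (oIoi (p + r))) = ⊤ := by
            rw [← map_iSup, iSup_oIoi_add, map_top]
          calc f (oIio r) = (⨆ p : ℝ, g (N 1) (oIoi (p + r))) ⊓ f (oIio r) := by
                rw [h1, top_inf_eq]
            _ = ⨆ p : ℝ, g (N 1) (oIoi (p + r)) ⊓ f (oIio r) := iSup_inf_eq _ _
            _ ≤ ⨆ p, U0 p := by
                refine iSup_le fun p => le_iSup_of_le p ?_
                have h2 := le_U0 p 0 r
                norm_num at h2
                exact h2
  have hL0top : (⨆ q, L0 q) = ⊤ := by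
    apply top_le_iff.mp
    calc (⊤ : M) = f ⊤ := (map_top f).symm
      _ = f (⨆ r : ℝ, oIio r) := by rw [iSup_oIio]
      _ = ⨆ r : ℝ, f (oIio r) := map_iSup f _
      _ ≤ ⨆ q, L0 q := by
          refine iSup_le fun r => ?_
          have h1 : (⨆ q : ℝ, g (N 1) (oIio (q - r))) = ⊤ := by
            rw [← map_iSup, iSup_oIio_sub, map_top]
          calc f (oIio r) = (⨆ q : ℝ, g (N 1) (oIio (q - r))) ⊓ f (oIio r) := by
                rw [h1, top_inf_eq]
            _ = ⨆ q : ℝ, g (N 1) (oIio (q - r)) ⊓ f (oIio r) := iSup_inf_eq _ _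
            _ ≤ ⨆ q, L0 q := by
                refine iSup_le fun q => le_iSup_of_le q ?_
                have h2 := le_L0 q 0 r
                norm_num at h2
                exact h2
  refine ⟨cutHom U0 L0 hU0 hL0 hdisj htot hU0top hL0top, ?_⟩
  have hIoi : ∀ t, cutHom U0 L0 hU0 hL0 hdisj htot hU0top hL0top (oIoi t) = U0 t := fun t =>
    cutFun_oIoi hU0 hdisj hL0top t
  have hIio : ∀ t, cutHom U0 L0 hU0 hL0 hdisj htot hU0top hL0top (oIio t) = L0 t := fun t =>
    cutFun_oIio hL0 hdisj hU0top t
  intro k hk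
  refine ⟨N k, fun n hn ε hε => ?_⟩
  refine iSup_le fun s => sup_le ?_ ?_
  · rw [hIio s]
    simp only [hL0def]
    rw [iSup_inf_eq]
    refine iSup_le fun k' => ?_
    rw [iSup_inf_eq]
    refine iSup_le fun r => ?_
    rcases le_or_gt r 0 with hr | hr
    · have hb : f (oIio (((k' : ℝ) + 1) * r)) = ⊥ :=
        hfneg _ (mul_nonpos_of_nonneg_of_nonpos (by positivity) hr)
      rw [hb, inf_bot_eq, bot_inf_eq]
      exact bot_le
    · set c : ℕ := min (k' + 1) k with hcdef
      have hc : 0 < c := lt_min (Nat.succ_pos k') hk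
      have ha := key c hc (N (k' + 1)) n (hNm c (k' + 1) (min_le_left _ _))
        (le_trans (hNm c k (min_le_right _ _)) hn) (r + ε) (by linarith) (s - r)
      have e : s - r + (r + ε) = s + ε := by ring
      rw [e] at ha
      calc g (N (k' + 1)) (oIio (s - r)) ⊓ f (oIio (((k' : ℝ) + 1) * r)) ⊓ g n (oIoi (s + ε))
          ≤ (g (N (k' + 1)) (oIio (s - r)) ⊓ g n (oIoi (s + ε))) ⊓
            f (oIio (((k' : ℝ) + 1) * r)) :=
            le_inf (le_inf (inf_le_left.trans inf_le_left) inf_le_right)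
              (inf_le_left.trans inf_le_right)
        _ ≤ f (oIoi ((c : ℝ) * (r + ε))) ⊓ f (oIio (((k' : ℝ) + 1) * r)) := inf_le_inf_right _ ha
        _ = f (oIoi ((c : ℝ) * (r + ε)) ⊓ oIio (((k' : ℝ) + 1) * r)) := (map_inf f _ _).symm
        _ ≤ f (oIoi ((k : ℝ) * ε)) := by
            rw [hcdef]
            exact hfm (interval_incl k k' hk hr hε)
  · rw [hIoi (s + ε)]
    simp only [hU0def]
    rw [inf_iSup_eq]
    refine iSup_le fun k' => ?_
    rw [inf_iSup_eq]
    refine iSup_le fun r => ?_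
    rcases le_or_gt r 0 with hr | hr
    · have hb : f (oIio (((k' : ℝ) + 1) * r)) = ⊥ :=
        hfneg _ (mul_nonpos_of_nonneg_of_nonpos (by positivity) hr)
      rw [hb, inf_bot_eq, inf_bot_eq]
      exact bot_le
    · set c : ℕ := min (k' + 1) k with hcdef
      have hc : 0 < c := lt_min (Nat.succ_pos k') hk
      have ha := key c hc n (N (k' + 1)) (le_trans (hNm c k (min_le_right _ _)) hn)
        (hNm c (k' + 1) (min_le_left _ _)) (r + ε) (by linarith) s
      have e : s + (r + ε) = s + ε + r := by ring
      rw [e] at ha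
      calc g n (oIio s) ⊓ (g (N (k' + 1)) (oIoi (s + ε + r)) ⊓ f (oIio (((k' : ℝ) + 1) * r)))
          ≤ (g n (oIio s) ⊓ g (N (k' + 1)) (oIoi (s + ε + r))) ⊓
            f (oIio (((k' : ℝ) + 1) * r)) :=
            le_inf (le_inf inf_le_left (inf_le_right.trans inf_le_left))
              (inf_le_right.trans inf_le_right)
        _ ≤ f (oIoi ((c : ℝ) * (r + ε))) ⊓ f (oIio (((k' : ℝ) + 1) * r)) := inf_le_inf_right _ ha
        _ = f (oIoi ((c : ℝ) * (r + ε)) ⊓ oIio (((k' : ℝ) + 1) * r)) := (map_inf f _ _).symm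
        _ ≤ f (oIoi ((k : ℝ) * ε)) := by
            rw [hcdef]
            exact hfm (interval_incl k k' hk hr hε)
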